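/- Let f be convex and differentiable on [a,b]. For every x ∈ [a,b], the difference between the secant and the function satisfies s(x) - f(x) ≤ (b-a)·(f'(b) - f'(a))/4, where s is the secant through (a,f(a)) and (b,f(b)). -/

import Mathlib

theorem secant_minus_function_bound
    (f : ℝ → ℝ) (a b fa' fb' : ℝ) (hab : a < b)
    (hconv : ConvexOn ℝ (Set.Icc a b) f)
    (hdiff : DifferentiableOn ℝ f (Set.Icc a b))
    (hfa : HasDerivAt f fa' a) (hfb : HasDerivAt f fb' b) :
    ∀ x ∈ Set.Icc a b,
      (f a + ((f b - f a) / (b - a)) * (x - a)) - f x ≤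
        (b - a) * (fb' - fa') / 4 := by
  intro x hx
  obtain ⟨hax, hxb⟩ := hx
  have ha : a ∈ Set.Icc a b := ⟨le_refl a, hab.le⟩
  have hb : b ∈ Set.Icc a b := ⟨hab.le, le_refl b⟩
  have hba : (0:ℝ) < b - a := sub_pos.mpr hab
  set m := (f b - f a) / (b - a) with hm
  have h1 : fa' ≤ m := by
    have := hconv.le_slope_of_hasDerivAt ha hb hab hfa
    rwa [slope_def_field] at this
  have h2 : m ≤ fb' := by
    have := hconv.slope_le_of_hasDerivAt ha hb hab hfb
    rwa [slope_def_field] at this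
  have hmb : f a + m * (b - a) = f b := by
    rw [hm]; field_simp; ring
  rcases eq_or_lt_of_le hax with rfl | hax'
  · simp only [sub_self, mul_zero, add_zero, sub_self]
    nlinarith [mul_nonneg hba.le (show (0:ℝ) ≤ fb' - fa' by linarith)]
  rcases eq_or_lt_of_le hxb with rfl | hxb'
  · rw [hmb]
    simp only [sub_self]
    nlinarith [mul_nonneg hba.le (show (0:ℝ) ≤ fb' - fa' by linarith)]
  -- tangent at a: f a + fa' * (x - a) ≤ f x
  have hta : f a + fa' * (x - a) ≤ f x := by
    have := hconv.le_slope_of_hasDerivAt ha ⟨hax, hxb⟩ hax' hfa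
    rw [slope_def_field, le_div_iff₀ (by linarith : (0:ℝ) < x - a)] at this
    linarith
  -- tangent at b: f b - fb' * (b - x) ≤ f x
  have htb : f b - fb' * (b - x) ≤ f x := by
    have := hconv.slope_le_of_hasDerivAt ⟨hax, hxb⟩ hb hxb' hfb
    rw [slope_def_field, div_le_iff₀ (by linarith : (0:ℝ) < b - x)] at this
    linarith
  have hu : (0:ℝ) < x - a := by linarith
  have hv : (0:ℝ) < b - x := by linarith
  have hP : (0:ℝ) ≤ m - fa' := by linarith
  have hQ : (0:ℝ) ≤ fb' - m := by linarith
  -- s(x) - f(x) ≤ min ((m - fa')(x-a), (fb' - m)(b-x))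
  have e1 : f a + m * (x - a) - f x ≤ (m - fa') * (x - a) := by nlinarith
  have e2 : f a + m * (x - a) - f x ≤ (fb' - m) * (b - x) := by
    have : f b - m * (b - x) - f x ≤ (fb' - m) * (b - x) := by nlinarith
    nlinarith [hmb]
  rcases le_total ((m - fa') * (x - a)) ((fb' - m) * (b - x)) with hc | hc
  · refine e1.trans ?_
    nlinarith [mul_nonneg hP hu.le, mul_nonneg hQ hv.le, mul_nonneg hP hv.le,
      mul_nonneg hQ hu.le, sq_nonneg ((m - fa') * (x - a) - (fb' - m) * (b - x)),
      sq_nonneg ((m - fa') * (b - x) - (fb' - m) * (x - a)),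
      mul_nonneg (mul_nonneg hP hu.le) (mul_nonneg hQ hv.le)]
  · refine e2.trans ?_
    nlinarith [mul_nonneg hP hu.le, mul_nonneg hQ hv.le, mul_nonneg hP hv.le,
      mul_nonneg hQ hu.le, sq_nonneg ((m - fa') * (x - a) - (fb' - m) * (b - x)),
      sq_nonneg ((m - fa') * (b - x) - (fb' - m) * (x - a)),
      mul_nonneg (mul_nonneg hP hu.le) (mul_nonneg hQ hv.le)]
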